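/- Let n be a positive integer and define 𝒦_n := {k ∈ ℕ : G_k(n) ≡ 0 (mod n)}. If 3 ∣ n and 9 ∤ n, then every positive multiple of 8 lies in ℕ ∖ 𝒦_n. If in addition n ≢ 2 (mod 4), then ℕ ∖ 𝒦_n is exactly the set of positive multiples of 8. -/

import Mathlib

/-- The Gaussian power sum `G_k(n) = ∑_{1 ≤ a, b ≤ n} (a + b·i)^k` in `ℤ[i]`. -/
def Gsum (k n : ℕ) : GaussianInt :=
  ∑ a ∈ Finset.Icc 1 n, ∑ b ∈ Finset.Icc 1 n, (⟨(a : ℤ), (b : ℤ)⟩ : GaussianInt) ^ k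

/-- `𝒦_n`: the set of `k` with `G_k(n) ≡ 0 (mod n)` in `ℤ[i]`. -/
def Kset (n : ℕ) : Set ℕ := {k | (n : GaussianInt) ∣ Gsum k n}

open Finset

/-- Gaussian integers modulo `n`. -/
@[ext] structure GZ (n : ℕ) where
  re : ZMod n
  im : ZMod n
deriving DecidableEq

namespace GZ
variable {n : ℕ}

instance : Zero (GZ n) := ⟨⟨0, 0⟩⟩
instance : One (GZ n) := ⟨⟨1, 0⟩⟩
instance : Add (GZ n) := ⟨fun a b => ⟨a.re + b.re, a.im + b.im⟩⟩
instance : Neg (GZ n) := ⟨fun a => ⟨-a.re, -a.im⟩⟩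
instance : Mul (GZ n) := ⟨fun a b => ⟨a.re * b.re - a.im * b.im, a.re * b.im + a.im * b.re⟩⟩

@[simp] lemma zero_re : (0 : GZ n).re = 0 := rfl
@[simp] lemma zero_im : (0 : GZ n).im = 0 := rfl
@[simp] lemma one_re : (1 : GZ n).re = 1 := rfl
@[simp] lemma one_im : (1 : GZ n).im = 0 := rfl
@[simp] lemma add_re (a b : GZ n) : (a + b).re = a.re + b.re := rfl
@[simp] lemma add_im (a b : GZ n) : (a + b).im = a.im + b.im := rfl
@[simp] lemma neg_re (a : GZ n) : (-a).re = -a.re := rfl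
@[simp] lemma neg_im (a : GZ n) : (-a).im = -a.im := rfl
@[simp] lemma mul_re (a b : GZ n) : (a * b).re = a.re * b.re - a.im * b.im := rfl
@[simp] lemma mul_im (a b : GZ n) : (a * b).im = a.re * b.im + a.im * b.re := rfl

instance : Sub (GZ n) := ⟨fun a b => ⟨a.re - b.re, a.im - b.im⟩⟩

@[simp] lemma sub_re (a b : GZ n) : (a - b).re = a.re - b.re := rfl
@[simp] lemma sub_im (a b : GZ n) : (a - b).im = a.im - b.im := rfl

instance : NatCast (GZ n) := ⟨fun x => ⟨x, 0⟩⟩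
instance : IntCast (GZ n) := ⟨fun x => ⟨x, 0⟩⟩

@[simp] lemma natCast_re' (x : ℕ) : (x : GZ n).re = x := rfl
@[simp] lemma natCast_im' (x : ℕ) : (x : GZ n).im = 0 := rfl
@[simp] lemma intCast_re' (x : ℤ) : (x : GZ n).re = x := rfl
@[simp] lemma intCast_im' (x : ℤ) : (x : GZ n).im = 0 := rfl

instance commRing : CommRing (GZ n) where
  add_assoc a b c := by ext <;> simp <;> ring
  zero_add a := by ext <;> simp
  add_zero a := by ext <;> simp
  add_comm a b := by ext <;> simp <;> ring
  mul_assoc a b c := by ext <;> simp <;> ring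
  one_mul a := by ext <;> simp
  mul_one a := by ext <;> simp
  zero_mul a := by ext <;> simp
  mul_zero a := by ext <;> simp
  left_distrib a b c := by ext <;> simp <;> ring
  right_distrib a b c := by ext <;> simp <;> ring
  mul_comm a b := by ext <;> simp <;> ring
  neg_add_cancel a := by ext <;> simp
  natCast x := x
  natCast_zero := by ext <;> simp
  natCast_succ x := by ext <;> simp
  intCast x := x
  intCast_ofNat x := by ext <;> simp
  intCast_negSucc x := by ext <;> simp [add_comm]
  sub a b := a - b
  sub_eq_add_neg a b := by ext <;> simp <;> ring
  nsmul := nsmulRec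
  zsmul := zsmulRec


end GZ

namespace GZ
variable {n : ℕ}

/-- the imaginary unit -/
def I : GZ n := ⟨0, 1⟩

@[simp] lemma I_re : (I : GZ n).re = 0 := rfl
@[simp] lemma I_im : (I : GZ n).im = 1 := rfl

lemma I_mul_I : (I : GZ n) * I = -1 := by ext <;> simp

lemma I_pow_four : (I : GZ n) ^ 4 = 1 := by
  have : (I : GZ n) ^ 4 = (I * I) * (I * I) := by ring
  rw [this, I_mul_I]; ring

def conj (z : GZ n) : GZ n := ⟨z.re, -z.im⟩

/-- the norm, as an element of `ZMod n` -/
def Nm (z : GZ n) : ZMod n := z.re * z.re + z.im * z.im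

/-- the scalar embedding -/
def rho : ZMod n →+* GZ n where
  toFun c := ⟨c, 0⟩
  map_one' := rfl
  map_mul' a b := by ext <;> simp
  map_zero' := rfl
  map_add' a b := by ext <;> simp

@[simp] lemma rho_re (c : ZMod n) : (rho c).re = c := rfl
@[simp] lemma rho_im (c : ZMod n) : (rho c).im = 0 := rfl

lemma mul_conj (z : GZ n) : z * conj z = rho (Nm z) := by
  ext <;> simp [conj, Nm] <;> ring

lemma isUnit_of_isUnit_nm {z : GZ n} (h : IsUnit (Nm z)) : IsUnit z := by
  obtain ⟨v, hv⟩ := h.exists_right_inv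
  refine IsUnit.of_mul_eq_one (conj z * rho v) ?_
  rw [← mul_assoc, mul_conj, ← map_mul, hv, map_one]

lemma natCast_eq_rho (x : ℕ) : (x : GZ n) = rho (x : ZMod n) := by ext <;> simp

/-- decomposition through the basis 1, I -/
lemma decomp (z : GZ n) : z = rho z.re + rho z.im * I := by ext <;> simp

instance charP : CharP (GZ n) n := by
  constructor
  intro x
  constructor
  · intro h
    have : ((x : GZ n)).re = 0 := by rw [h]; rfl
    rw [natCast_re'] at this
    exact (ZMod.natCast_eq_zero_iff x n).mp this
  · intro h
    rw [natCast_eq_rho, (ZMod.natCast_eq_zero_iff x n).mpr h, map_zero]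

/-- equivalence with pairs -/
def toProd : GZ n ≃ ZMod n × ZMod n where
  toFun z := (z.re, z.im)
  invFun p := ⟨p.1, p.2⟩
  left_inv z := rfl
  right_inv p := rfl

instance fintype [NeZero n] : Fintype (GZ n) := Fintype.ofEquiv _ (toProd (n := n)).symm

end GZ

open Finset

noncomputable section

namespace GZ

/-- reduction hom from Gaussian integers -/
def phi (n : ℕ) : GaussianInt →+* GZ n where
  toFun z := ⟨(z.re : ZMod n), (z.im : ZMod n)⟩
  map_one' := by ext <;> simp
  map_zero' := by ext <;> simp
  map_add' a b := by ext <;> simp [Zsqrtd.re_add, Zsqrtd.im_add]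
  map_mul' a b := by
    ext <;> simp [Zsqrtd.re_mul, Zsqrtd.im_mul] <;> push_cast <;> ring

@[simp] lemma phi_re (n : ℕ) (z : GaussianInt) : (phi n z).re = (z.re : ZMod n) := rfl
@[simp] lemma phi_im (n : ℕ) (z : GaussianInt) : (phi n z).im = (z.im : ZMod n) := rfl

lemma phi_eq_zero_iff {n : ℕ} (z : GaussianInt) :
    phi n z = 0 ↔ (n : GaussianInt) ∣ z := by
  have : ((n : ℤ) : GaussianInt) = (n : GaussianInt) := by push_cast; rfl
  rw [← this, Zsqrtd.intCast_dvd]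
  constructor
  · intro h
    have h1 : (phi n z).re = 0 := by rw [h]; rfl
    have h2 : (phi n z).im = 0 := by rw [h]; rfl
    simp only [phi_re, phi_im, ZMod.intCast_zmod_eq_zero_iff_dvd] at h1 h2
    exact ⟨h1, h2⟩
  · rintro ⟨h1, h2⟩
    ext <;> simp [ZMod.intCast_zmod_eq_zero_iff_dvd, h1, h2]

/-- the full power sum over `(ZMod n)[i]` -/
def S (k n : ℕ) [NeZero n] : GZ n :=
  ∑ x : ZMod n, ∑ y : ZMod n, (⟨x, y⟩ : GZ n) ^ k

lemma S_eq_univ_sum (k n : ℕ) [NeZero n] : S k n = ∑ z : GZ n, z ^ k := by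
  have h1 : S k n = ∑ p : ZMod n × ZMod n, (toProd.symm p) ^ k := by
    rw [S, Fintype.sum_prod_type]; rfl
  rw [h1]
  exact Fintype.sum_equiv toProd.symm _ _ fun p => rfl

end GZ

section sumlemmas

variable {M : Type} [AddCommMonoid M]

lemma sum_range_zmod (q : ℕ) [NeZero q] (F : ZMod q → M) :
    ∑ j ∈ range q, F (j : ZMod q) = ∑ x : ZMod q, F x := by
  refine Finset.sum_nbij' (fun j => (j : ZMod q)) (fun x => x.val) ?_ ?_ ?_ ?_ ?_
  · intro a ha; exact mem_univ _
  · intro x hx; simpa using ZMod.val_lt x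
  · intro a ha; exact ZMod.val_cast_of_lt (mem_range.mp ha)
  · intro x hx; simp [ZMod.natCast_val, ZMod.cast_id]
  · intro a ha; rfl

lemma sum_range_mul' (s t : ℕ) (f : ℕ → M) :
    ∑ a ∈ range (s * t), f a = ∑ i ∈ range s, ∑ j ∈ range t, f (i * t + j) := by
  induction s with
  | zero => simp
  | succ m ih =>
      rw [Nat.succ_mul, Finset.sum_range_add, ih, Finset.sum_range_succ]

lemma sum_Icc_one (n : ℕ) (f : ℕ → M) :
    ∑ a ∈ Icc 1 n, f a = ∑ a ∈ range n, f (1 + a) := by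
  rw [← Finset.Ico_add_one_right_eq_Icc, Finset.sum_Ico_eq_sum_range]
  simp

/-- Key periodization lemma. -/
lemma sum_Icc_period (q n : ℕ) [NeZero q] (hdvd : q ∣ n) (F : ZMod q → M) :
    ∑ a ∈ Icc 1 n, F (a : ZMod q) = (n / q) • ∑ x : ZMod q, F x := by
  obtain ⟨t, rfl⟩ := hdvd
  have hq : q ≠ 0 := NeZero.ne q
  rw [sum_Icc_one, mul_comm q t, sum_range_mul']
  have : ∀ i ∈ range t, ∑ j ∈ range q, F ((1 + (i * q + j) : ℕ) : ZMod q)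
      = ∑ x : ZMod q, F x := by
    intro i _
    have : ∀ j : ℕ, ((1 + (i * q + j) : ℕ) : ZMod q) = ((1 + j : ℕ) : ZMod q) := by
      intro j; push_cast [ZMod.natCast_self]; ring
    rw [Finset.sum_congr rfl fun j _ => by rw [this j]]
    rw [show (fun j : ℕ => F ((1 + j : ℕ) : ZMod q)) = fun j : ℕ => F (((j : ZMod q)) + 1) from
      funext fun j => by push_cast; rw [add_comm]]
    rw [sum_range_zmod q (fun x => F (x + 1))]
    exact Fintype.sum_equiv (Equiv.addRight 1) _ _ fun x => rfl
  rw [Finset.sum_congr rfl this, Finset.sum_const, card_range, Nat.mul_div_cancel t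
    (Nat.pos_of_ne_zero hq)]

end sumlemmas

namespace GZ

lemma phi_mk (q : ℕ) (a b : ℕ) :
    phi q (⟨(a : ℤ), (b : ℤ)⟩ : GaussianInt) = (⟨(a : ZMod q), (b : ZMod q)⟩ : GZ q) := by
  ext <;> simp

lemma reduce (k q n : ℕ) [NeZero q] (hdvd : q ∣ n) :
    phi q (Gsum k n) = (n / q) ^ 2 • S k q := by
  rw [Gsum, map_sum]
  have hterm : ∀ a ∈ Finset.Icc 1 n, phi q (∑ b ∈ Finset.Icc 1 n, (⟨(a : ℤ), (b : ℤ)⟩ : GaussianInt) ^ k)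
      = (n / q) • ∑ y : ZMod q, (⟨(a : ZMod q), y⟩ : GZ q) ^ k := by
    intro a _
    rw [map_sum]
    have : ∀ b ∈ Finset.Icc 1 n, phi q ((⟨(a : ℤ), (b : ℤ)⟩ : GaussianInt) ^ k)
        = (fun y : ZMod q => (⟨(a : ZMod q), y⟩ : GZ q) ^ k) ((b : ZMod q)) := by
      intro b _; rw [map_pow, phi_mk]
    rw [Finset.sum_congr rfl this]
    exact sum_Icc_period q n hdvd (fun y : ZMod q => (⟨(a : ZMod q), y⟩ : GZ q) ^ k)
  rw [Finset.sum_congr rfl hterm, ← Finset.smul_sum]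
  have : ∀ a ∈ Finset.Icc 1 n, (∑ y : ZMod q, (⟨(a : ZMod q), y⟩ : GZ q) ^ k)
      = (fun x : ZMod q => ∑ y : ZMod q, (⟨x, y⟩ : GZ q) ^ k) ((a : ZMod q)) := by
    intro a _; rfl
  rw [Finset.sum_congr rfl this]
  rw [sum_Icc_period q n hdvd (fun x : ZMod q => ∑ y : ZMod q, (⟨x, y⟩ : GZ q) ^ k)]
  rw [smul_smul, ← sq]
  rfl

lemma dvd_gsum_iff (k q : ℕ) [NeZero q] :
    (q : GaussianInt) ∣ Gsum k q ↔ S k q = 0 := by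
  have hq : 0 < q := Nat.pos_of_ne_zero (NeZero.ne q)
  rw [← phi_eq_zero_iff, reduce k q q dvd_rfl, Nat.div_self hq, one_pow, one_smul]

lemma dvd_gsum_of_S_eq_zero {k q n : ℕ} [NeZero q] (hdvd : q ∣ n) (hS : S k q = 0) :
    (q : GaussianInt) ∣ Gsum k n := by
  rw [← phi_eq_zero_iff, reduce k q n hdvd, hS, smul_zero]

/-- the multiplicative symmetry: `S = u^k * S` for every unit `u`. -/
lemma S_eq_unit_pow_mul (k n : ℕ) [NeZero n] (u : (GZ n)ˣ) :
    S k n = (u : GZ n) ^ k * S k n := by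
  rw [S_eq_univ_sum]
  have hb : Function.Bijective (fun z : GZ n => (u : GZ n) * z) := by
    refine Function.bijective_iff_has_inverse.mpr ⟨fun z => ((u⁻¹ : (GZ n)ˣ) : GZ n) * z, ?_, ?_⟩
    · intro z; simp
    · intro z; simp
  calc ∑ z : GZ n, z ^ k = ∑ z : GZ n, ((u : GZ n) * z) ^ k :=
        (Function.Bijective.sum_comp hb _).symm
    _ = (u : GZ n) ^ k * ∑ z : GZ n, z ^ k := by
        rw [Finset.mul_sum]; exact Finset.sum_congr rfl fun z _ => mul_pow _ _ _

lemma S_eq_zero_of_unit (k n : ℕ) [NeZero n] (u : (GZ n)ˣ)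
    (h : IsUnit ((u : GZ n) ^ k - 1)) : S k n = 0 := by
  have h0 : ((u : GZ n) ^ k - 1) * S k n = 0 := by
    rw [sub_mul, one_mul, ← S_eq_unit_pow_mul, sub_self]
  obtain ⟨v, hv⟩ := h.exists_left_inv
  calc S k n = (v * ((u : GZ n) ^ k - 1)) * S k n := by rw [hv, one_mul]
    _ = v * (((u : GZ n) ^ k - 1) * S k n) := by ring
    _ = 0 := by rw [h0, mul_zero]

end GZ

namespace GZ

variable {p : ℕ}

lemma two_isUnit [Fact p.Prime] (hp2 : p ≠ 2) : IsUnit (2 : ZMod p) := by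
  have h := (ZMod.isUnit_iff_coprime 2 p).mpr
    ((Nat.coprime_primes Nat.prime_two (Fact.out : p.Prime)).mpr (fun h => hp2 h.symm))
  simpa using h

/-- `ψ_u` hom for split primes -/
def psi (u : ZMod p) (hu : u * u = -1) : GZ p →+* ZMod p where
  toFun z := z.re + u * z.im
  map_one' := by simp
  map_zero' := by simp
  map_add' a b := by simp; ring
  map_mul' a b := by simp; linear_combination (-(a.im : ZMod p) * b.im) * hu

lemma S_eq_zero_split (k : ℕ) [Fact p.Prime] (hp2 : p ≠ 2) (hp4 : p % 4 ≠ 3) :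
    S k p = 0 := by
  obtain ⟨u, hu⟩ := (ZMod.exists_sq_eq_neg_one_iff (p := p)).mpr hp4
  have hu : u * u = -1 := hu.symm
  have key : ∀ (v : ZMod p) (hv : v * v = -1), (S k p).re + v * (S k p).im = 0 := by
    intro v hv
    have : psi v hv (S k p) = (S k p).re + v * (S k p).im := rfl
    rw [← this, S, map_sum]
    have hterm : ∀ x ∈ Finset.univ, psi v hv (∑ y : ZMod p, (⟨x, y⟩ : GZ p) ^ k)
        = ∑ y : ZMod p, (x + v * y) ^ k := by
      intro x _
      rw [map_sum]
      exact Finset.sum_congr rfl fun y _ => by rw [map_pow]; rfl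
    rw [Finset.sum_congr rfl hterm, Finset.sum_comm]
    have hin : ∀ y ∈ Finset.univ, ∑ x : ZMod p, (x + v * y) ^ k = ∑ x : ZMod p, x ^ k := by
      intro y _
      exact Fintype.sum_equiv (Equiv.addRight (v * y)) _ _ fun x => rfl
    rw [Finset.sum_congr rfl hin, Finset.sum_const, Finset.card_univ, ZMod.card,
      nsmul_eq_mul, ZMod.natCast_self, zero_mul]
  have h1 := key u hu
  have h2 := key (-u) (by rw [neg_mul_neg, hu])
  have hre : (S k p).re = 0 := by
    have h3 : (2 : ZMod p) * (S k p).re = 0 := by linear_combination h1 + h2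
    obtain ⟨w, hw⟩ := (two_isUnit hp2).exists_left_inv
    calc (S k p).re = (w * 2) * (S k p).re := by rw [hw, one_mul]
      _ = w * ((2 : ZMod p) * (S k p).re) := by ring
      _ = 0 := by rw [h3, mul_zero]
  have him : (S k p).im = 0 := by
    have h4 : u * (S k p).im = 0 := by linear_combination h1 - hre
    have hu' : IsUnit u := IsUnit.of_mul_eq_one (-u) (by linear_combination -hu)
    obtain ⟨w, hw⟩ := hu'.exists_left_inv
    calc (S k p).im = (w * u) * (S k p).im := by rw [hw, one_mul]
      _ = w * (u * (S k p).im) := by ring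
      _ = 0 := by rw [h4, mul_zero]
  ext
  · exact hre
  · exact him

end GZ

namespace GZ

variable {p : ℕ}

lemma nm_ne_zero (hp4 : p % 4 = 3) [Fact p.Prime] {z : GZ p} (hz : z ≠ 0) : Nm z ≠ 0 := by
  intro h
  rw [Nm] at h
  by_cases hb : z.im = 0
  · have : z.re * z.re = 0 := by rw [hb] at h; simpa using h
    have hre : z.re = 0 := by
      rcases mul_eq_zero.mp this with h' | h' <;> exact h'
    exact hz (by ext <;> simp [hre, hb])
  · have : (z.re * z.im⁻¹) * (z.re * z.im⁻¹) = -1 := by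
      field_simp
      linear_combination h
    exact (ZMod.exists_sq_eq_neg_one_iff (p := p)).mp ⟨_, this.symm⟩ hp4

lemma isUnit_of_ne_zero (hp4 : p % 4 = 3) [Fact p.Prime] {z : GZ p} (hz : z ≠ 0) :
    IsUnit z :=
  isUnit_of_isUnit_nm ((nm_ne_zero hp4 hz).isUnit)

/-- `I` as a unit -/
def unitI : (GZ p)ˣ where
  val := I
  inv := -I
  val_inv := by rw [mul_neg, I_mul_I, neg_neg]
  inv_val := by rw [neg_mul, I_mul_I, neg_neg]

lemma I_pow_mod (k : ℕ) : (I : GZ p) ^ k = I ^ (k % 4) := by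
  conv_lhs => rw [← Nat.div_add_mod k 4]
  rw [pow_add, pow_mul, I_pow_four, one_pow, one_mul]

lemma I_pow_three : (I : GZ p) ^ 3 = -I := by
  have : (I : GZ p) ^ 3 = I * I * I := by ring
  rw [this, I_mul_I]; ring

lemma I_sq : (I : GZ p) ^ 2 = -1 := by rw [sq, I_mul_I]

lemma frob (hp4 : p % 4 = 3) [Fact p.Prime] (z : GZ p) : z ^ p = conj z := by
  have hI : (I : GZ p) ^ p = -I := by
    rw [I_pow_mod, show p % 4 = 3 from hp4, I_pow_three]
  calc z ^ p = (rho z.re + rho z.im * I) ^ p := by rw [← decomp]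
    _ = (rho z.re) ^ p + (rho z.im * I) ^ p := add_pow_char _ _ _
    _ = rho (z.re ^ p) + rho (z.im ^ p) * I ^ p := by rw [map_pow, map_pow, mul_pow]
    _ = rho z.re + rho z.im * (-I) := by rw [ZMod.pow_card, ZMod.pow_card, hI]
    _ = conj z := by ext <;> simp [conj]

lemma four_isUnit [Fact p.Prime] (hp2 : p ≠ 2) : IsUnit (4 : ZMod p) := by
  have h4 : (4 : ZMod p) = 2 * 2 := by norm_num
  rw [h4]
  exact (two_isUnit (p := p) hp2).mul (two_isUnit (p := p) hp2)

lemma S_eq_zero_inert (k : ℕ) [Fact p.Prime] (hp4 : p % 4 = 3) (hk8 : ¬ 8 ∣ k) :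
    S k p = 0 := by
  have hp2 : p ≠ 2 := by intro h; rw [h] at hp4; omega
  have hcases : k % 4 = 1 ∨ k % 4 = 2 ∨ k % 4 = 3 ∨ k % 8 = 4 := by omega
  have hIk : (unitI : (GZ p)ˣ).val = I := rfl
  rcases hcases with h | h | h | h
  · refine S_eq_zero_of_unit k p unitI ?_
    rw [hIk, I_pow_mod, h, pow_one]
    refine isUnit_of_isUnit_nm ?_
    have hNm : Nm ((I : GZ p) - 1) = 2 := by
      simp only [Nm, sub_re, sub_im, I_re, I_im, one_re, one_im]
      ring_nf
      try exact one_add_one_eq_two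
      try norm_num
    rw [hNm]; exact two_isUnit hp2
  · refine S_eq_zero_of_unit k p unitI ?_
    rw [hIk, I_pow_mod, h, I_sq]
    refine isUnit_of_isUnit_nm ?_
    have hNm : Nm ((-1 : GZ p) - 1) = 4 := by
      simp only [Nm, sub_re, sub_im, neg_re, neg_im, one_re, one_im]
      ring_nf
      try norm_num
    rw [hNm]; exact four_isUnit hp2
  · refine S_eq_zero_of_unit k p unitI ?_
    rw [hIk, I_pow_mod, h, I_pow_three]
    refine isUnit_of_isUnit_nm ?_
    have hNm : Nm ((-I : GZ p) - 1) = 2 := by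
      simp only [Nm, sub_re, sub_im, neg_re, neg_im, I_re, I_im, one_re, one_im]
      ring_nf
      try exact one_add_one_eq_two
      try norm_num
    rw [hNm]; exact two_isUnit hp2
  · -- the 4 mod 8 case
    -- get a nonsquare
    obtain ⟨c, hc⟩ := FiniteField.exists_nonsquare (F := ZMod p)
      (by rw [ZMod.ringChar_zmod_n]; exact hp2)
    have hc0 : c ≠ 0 := fun h => hc (h ▸ ⟨0, by ring⟩)
    have heuler : c ^ (p / 2) = -1 := by
      have hx : c ^ (p / 2) * c ^ (p / 2) = 1 := by
        rw [← pow_add]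
        have : p / 2 + p / 2 = p - 1 := by
          have := (Fact.out : p.Prime).two_le; omega
        rw [this]
        exact ZMod.pow_card_sub_one_eq_one hc0
      rcases mul_self_eq_one_iff.mp hx with h1 | h1
      · exact absurd ((ZMod.euler_criterion p hc0).mpr h1) hc
      · exact h1
    obtain ⟨a, b, hab⟩ := ZMod.sq_add_sq p c
    set w : GZ p := ⟨a, b⟩ with hw
    have hNm : Nm w = c := by rw [Nm]; rw [← hab]; ring
    have hwu : IsUnit w := isUnit_of_isUnit_nm (by rw [hNm]; exact hc0.isUnit)
    set u : (GZ p)ˣ := hwu.unit with hu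
    have huv : (u : GZ p) = w := hwu.unit_spec
    have hfrobw : w ^ (p + 1) = rho c := by
      rw [pow_succ, frob hp4, ← hNm, ← mul_conj, mul_comm]
    refine S_eq_zero_of_unit k p u ?_
    rw [huv]
    refine isUnit_of_ne_zero hp4 (sub_ne_zero.mpr ?_)
    intro h1
    -- derive contradiction
    have huk : u ^ k = 1 := Units.ext (by rw [Units.val_pow_eq_pow_val, huv, h1, Units.val_one])
    have ho1 : orderOf u ∣ k := orderOf_dvd_of_pow_eq_one huk
    have hfull : w ^ ((p + 1) * (p - 1)) = 1 := by
      rw [pow_mul, hfrobw, ← map_pow, ZMod.pow_card_sub_one_eq_one hc0, map_one]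
    have ho2 : orderOf u ∣ (p + 1) * (p - 1) :=
      orderOf_dvd_of_pow_eq_one (Units.ext (by
        rw [Units.val_pow_eq_pow_val, huv, hfull, Units.val_one]))
    -- number theory: orderOf u divides (p+1) * ((p-1)/2)
    have hNT : orderOf u ∣ (p + 1) * ((p - 1) / 2) := by
      obtain ⟨s, hs⟩ : ∃ s, p = 4 * s + 3 := ⟨p / 4, by omega⟩
      obtain ⟨j, hj⟩ : ∃ j, k = 8 * j + 4 := ⟨k / 8, by omega⟩
      have e1 : k = 4 * (2 * j + 1) := by omega
      have ha1 : p + 1 = 4 * (s + 1) := by omega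
      have ha2 : p - 1 = 2 * (2 * s + 1) := by omega
      have ha3 : (p - 1) / 2 = 2 * s + 1 := by omega
      have e2 : (p + 1) * (p - 1) = 4 * (2 * ((s + 1) * (2 * s + 1))) := by
        rw [ha1, ha2]; ring
      have e3 : (p + 1) * ((p - 1) / 2) = 4 * ((s + 1) * (2 * s + 1)) := by
        rw [ha1, ha3]; ring
      rw [e1] at ho1; rw [e2] at ho2; rw [e3]
      have hg : orderOf u ∣ Nat.gcd (4 * (2 * j + 1)) (4 * (2 * ((s + 1) * (2 * s + 1)))) :=
        Nat.dvd_gcd ho1 ho2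
      rw [Nat.gcd_mul_left] at hg
      set m := (s + 1) * (2 * s + 1) with hm
      have hd : Nat.gcd (2 * j + 1) (2 * m) ∣ m := by
        refine (Nat.Coprime.dvd_of_dvd_mul_left ?_ (Nat.gcd_dvd_right _ _))
        have : ¬ 2 ∣ Nat.gcd (2 * j + 1) (2 * m) := by
          intro h2
          have := h2.trans (Nat.gcd_dvd_left _ _)
          omega
        exact ((Nat.prime_two.coprime_iff_not_dvd).mpr this).symm
      exact hg.trans (Nat.mul_dvd_mul_left 4 hd)
    have hpow : u ^ ((p + 1) * ((p - 1) / 2)) = 1 := orderOf_dvd_iff_pow_eq_one.mp hNT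
    have hwpow : w ^ ((p + 1) * ((p - 1) / 2)) = 1 := by
      have := congrArg (Units.val) hpow
      rw [Units.val_pow_eq_pow_val, huv, Units.val_one] at this
      exact this
    have hwpow2 : w ^ ((p + 1) * ((p - 1) / 2)) = -1 := by
      rw [pow_mul, hfrobw, ← map_pow]
      have : (p - 1) / 2 = p / 2 := by have := (Fact.out : p.Prime).two_le; omega
      rw [this, heuler, map_neg, map_one]
    rw [hwpow] at hwpow2
    have hcontra : (1 : ZMod p) = -1 := by
      have := congrArg GZ.re hwpow2
      simpa using this
    have hlt : (2 : ℕ) < p := by omega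
    haveI : Fact (2 < p) := ⟨hlt⟩
    exact CharP.neg_one_ne_one (ZMod p) p hcontra.symm

end GZ

section primepow
open Finset

/-- range-indexed Gaussian power sum -/
def Gsum' (k n : ℕ) : GaussianInt :=
  ∑ a ∈ Finset.range n, ∑ b ∈ Finset.range n, (⟨(a : ℤ), (b : ℤ)⟩ : GaussianInt) ^ k

lemma GZ.phi_gsum' (k n : ℕ) [NeZero n] : GZ.phi n (Gsum' k n) = GZ.S k n := by
  rw [Gsum', map_sum, GZ.S]
  have hterm : ∀ a ∈ range n, GZ.phi n (∑ b ∈ range n, (⟨(a : ℤ), (b : ℤ)⟩ : GaussianInt) ^ k)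
      = (fun x : ZMod n => ∑ y : ZMod n, (⟨x, y⟩ : GZ n) ^ k) ((a : ZMod n)) := by
    intro a _
    rw [map_sum]
    have : ∀ b ∈ range n, GZ.phi n ((⟨(a : ℤ), (b : ℤ)⟩ : GaussianInt) ^ k)
        = (fun y : ZMod n => (⟨(a : ZMod n), y⟩ : GZ n) ^ k) ((b : ZMod n)) := by
      intro b _; rw [map_pow, GZ.phi_mk]
    rw [Finset.sum_congr rfl this]
    exact sum_range_zmod n (fun y : ZMod n => (⟨(a : ZMod n), y⟩ : GZ n) ^ k)
  rw [Finset.sum_congr rfl hterm]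
  exact sum_range_zmod n (fun x : ZMod n => ∑ y : ZMod n, (⟨x, y⟩ : GZ n) ^ k)

variable {R : Type} [CommRing R]

lemma binom_ex (x y : R) (k : ℕ) :
    ∃ c, (x + y) ^ k = x ^ k + (k : R) * x ^ (k - 1) * y + y ^ 2 * c := by
  induction k with
  | zero => exact ⟨0, by simp⟩
  | succ m ih =>
      obtain ⟨c, hc⟩ := ih
      match m with
      | 0 => exact ⟨0, by push_cast; ring⟩
      | j + 1 =>
          refine ⟨x * c + (j + 1 : ℕ) * x ^ j + y * c, ?_⟩
          rw [pow_succ, hc]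
          simp only [Nat.add_sub_cancel]
          push_cast
          ring

noncomputable def binomC (x y : R) (k : ℕ) : R := (binom_ex x y k).choose

lemma binomC_spec (x y : R) (k : ℕ) :
    (x + y) ^ k = x ^ k + (k : R) * x ^ (k - 1) * y + y ^ 2 * binomC x y k :=
  (binom_ex x y k).choose_spec

def reHom : GaussianInt →+ ℤ where
  toFun := Zsqrtd.re
  map_zero' := rfl
  map_add' _ _ := rfl

def imHom : GaussianInt →+ ℤ where
  toFun := Zsqrtd.im
  map_zero' := rfl
  map_add' _ _ := rfl

lemma sum_mk_row (p : ℕ) (s : ℤ) :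
    ∑ t ∈ range p, (⟨s, (t : ℤ)⟩ : GaussianInt) = ⟨p * s, ∑ t ∈ range p, (t : ℤ)⟩ := by
  ext
  · rw [show (∑ t ∈ range p, (⟨s, (t : ℤ)⟩ : GaussianInt)).re
      = reHom (∑ t ∈ range p, (⟨s, (t : ℤ)⟩ : GaussianInt)) from rfl, map_sum]
    simp [show ∀ x : GaussianInt, reHom x = x.re from fun _ => rfl, mul_comm]
  · rw [show (∑ t ∈ range p, (⟨s, (t : ℤ)⟩ : GaussianInt)).im
      = imHom (∑ t ∈ range p, (⟨s, (t : ℤ)⟩ : GaussianInt)) from rfl, map_sum]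
    simp [show ∀ x : GaussianInt, imHom x = x.im from fun _ => rfl]

lemma sum_mk_col (p : ℕ) (σ : ℤ) :
    ∑ s ∈ range p, (⟨(p : ℤ) * (s : ℤ), σ⟩ : GaussianInt)
      = ⟨(p : ℤ) * ∑ s ∈ range p, (s : ℤ), (p : ℤ) * σ⟩ := by
  ext
  · rw [show (∑ s ∈ range p, (⟨(p:ℤ) * (s : ℤ), σ⟩ : GaussianInt)).re
      = reHom (∑ s ∈ range p, (⟨(p:ℤ) * (s : ℤ), σ⟩ : GaussianInt)) from rfl, map_sum]
    simp [show ∀ x : GaussianInt, reHom x = x.re from fun _ => rfl, Finset.mul_sum]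
  · rw [show (∑ s ∈ range p, (⟨(p:ℤ) * (s : ℤ), σ⟩ : GaussianInt)).im
      = imHom (∑ s ∈ range p, (⟨(p:ℤ) * (s : ℤ), σ⟩ : GaussianInt)) from rfl, map_sum]
    simp [show ∀ x : GaussianInt, imHom x = x.im from fun _ => rfl, mul_comm]

lemma gsum'_rec (k p r : ℕ) (hpr : p ∣ r) :
    ((r * p : ℕ) : GaussianInt) ∣ Gsum' k (r * p) - (p : GaussianInt) ^ 2 * Gsum' k r := by
  classical
  set σ : ℤ := ∑ t ∈ range p, (t : ℤ) with hσ
  set z0 : ℕ → ℕ → GaussianInt := fun a b => ⟨(a : ℤ), (b : ℤ)⟩ with hz0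
  set w : ℕ → ℕ → GaussianInt := fun s t => ⟨(s : ℤ), (t : ℤ)⟩ with hwdef
  have cast_eq : ∀ s a₀ t b₀ : ℕ,
      (⟨((s * r + a₀ : ℕ) : ℤ), ((t * r + b₀ : ℕ) : ℤ)⟩ : GaussianInt)
        = z0 a₀ b₀ + (r : GaussianInt) * w s t := by
    intro s a₀ t b₀
    ext <;> simp [hz0, hwdef, Zsqrtd.re_mul, Zsqrtd.im_mul] <;> push_cast <;> ring
  -- the three pieces
  set C : ℕ → ℕ → GaussianInt := fun a b => (r : GaussianInt) * ((k : GaussianInt) * z0 a b ^ (k - 1)) with hC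
  set A : GaussianInt := ∑ s ∈ range p, ∑ a₀ ∈ range r, ∑ t ∈ range p, ∑ b₀ ∈ range r,
      z0 a₀ b₀ ^ k with hA
  set B : GaussianInt := ∑ s ∈ range p, ∑ a₀ ∈ range r, ∑ t ∈ range p, ∑ b₀ ∈ range r,
      C a₀ b₀ * w s t with hB
  set D : GaussianInt := ∑ s ∈ range p, ∑ a₀ ∈ range r, ∑ t ∈ range p, ∑ b₀ ∈ range r,
      ((r : GaussianInt) * w s t) ^ 2 * binomC (z0 a₀ b₀) ((r : GaussianInt) * w s t) k with hD
  have hsplit : Gsum' k (r * p) = A + B + D := by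
    rw [Gsum', mul_comm r p]
    rw [sum_range_mul' p r (fun a => ∑ b ∈ range (p * r), (⟨(a : ℤ), (b : ℤ)⟩ : GaussianInt) ^ k)]
    have h1 : ∀ s ∈ range p, ∀ a₀ ∈ range r,
        ∑ b ∈ range (p * r), (⟨((s * r + a₀ : ℕ) : ℤ), (b : ℤ)⟩ : GaussianInt) ^ k
        = ∑ t ∈ range p, ∑ b₀ ∈ range r,
            (z0 a₀ b₀ ^ k + C a₀ b₀ * w s t
              + ((r : GaussianInt) * w s t) ^ 2 * binomC (z0 a₀ b₀) ((r : GaussianInt) * w s t) k) := by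
      intro s _ a₀ _
      rw [sum_range_mul' p r (fun b => (⟨((s * r + a₀ : ℕ) : ℤ), (b : ℤ)⟩ : GaussianInt) ^ k)]
      refine Finset.sum_congr rfl fun t _ => Finset.sum_congr rfl fun b₀ _ => ?_
      rw [cast_eq s a₀ t b₀, binomC_spec (z0 a₀ b₀) ((r : GaussianInt) * w s t) k, hC]
      ring
    rw [hA, hB, hD]
    rw [Finset.sum_congr rfl (fun s hs => Finset.sum_congr rfl (fun a₀ ha₀ => h1 s hs a₀ ha₀))]
    simp only [Finset.sum_add_distrib]
  have hAval : A = ((p * p : ℕ) : GaussianInt) * Gsum' k r := by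
    rw [hA]
    simp only [Finset.sum_const, Finset.card_range, ← Finset.smul_sum, smul_smul]
    rw [nsmul_eq_mul]
    rfl
  have hrowB : ∀ s : ℕ, ∑ t ∈ range p, w s t = ⟨(p : ℤ) * (s : ℤ), σ⟩ := by
    intro s
    have := sum_mk_row p (s : ℤ)
    rw [hσ, hwdef]
    exact this
  have hBval : B = ((∑ a₀ ∈ range r, ∑ b₀ ∈ range r, C a₀ b₀) * ⟨(p : ℤ) * σ, (p : ℤ) * σ⟩) := by
    rw [hB]
    have hs : ∀ s ∈ range p, ∑ a₀ ∈ range r, ∑ t ∈ range p, ∑ b₀ ∈ range r, C a₀ b₀ * w s t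
        = (∑ a₀ ∈ range r, ∑ b₀ ∈ range r, C a₀ b₀) * ⟨(p : ℤ) * (s : ℤ), σ⟩ := by
      intro s _
      have h2 : ∀ a₀ ∈ range r, ∑ t ∈ range p, ∑ b₀ ∈ range r, C a₀ b₀ * w s t
          = (∑ b₀ ∈ range r, C a₀ b₀) * ⟨(p : ℤ) * (s : ℤ), σ⟩ := by
        intro a₀ _
        have h3 : ∀ t ∈ range p, ∑ b₀ ∈ range r, C a₀ b₀ * w s t
            = (∑ b₀ ∈ range r, C a₀ b₀) * w s t := by
          intro t _; rw [Finset.sum_mul]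
        rw [Finset.sum_congr rfl h3, ← Finset.mul_sum, hrowB s]
      rw [Finset.sum_congr rfl h2, ← Finset.sum_mul]
    rw [Finset.sum_congr rfl hs, ← Finset.mul_sum, sum_mk_col p σ, ← hσ]
  have hBdvd : ((r * p : ℕ) : GaussianInt) ∣ B := by
    rw [hBval]
    have hCfact : (∑ a₀ ∈ range r, ∑ b₀ ∈ range r, C a₀ b₀)
        = (r : GaussianInt) * ∑ a₀ ∈ range r, ∑ b₀ ∈ range r, ((k : GaussianInt) * z0 a₀ b₀ ^ (k - 1)) := by
      rw [Finset.mul_sum]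
      refine Finset.sum_congr rfl fun a₀ _ => ?_
      rw [Finset.mul_sum]
    have hmk : (⟨(p : ℤ) * σ, (p : ℤ) * σ⟩ : GaussianInt) = (p : GaussianInt) * ⟨σ, σ⟩ := by
      ext <;> simp [Zsqrtd.re_mul, Zsqrtd.im_mul]
    rw [hCfact, hmk]
    refine ⟨(∑ a₀ ∈ range r, ∑ b₀ ∈ range r, ((k : GaussianInt) * z0 a₀ b₀ ^ (k - 1))) * ⟨σ, σ⟩, ?_⟩
    push_cast
    ring
  have hDdvd : ((r * p : ℕ) : GaussianInt) ∣ D := by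
    rw [hD]
    refine Finset.dvd_sum fun s _ => Finset.dvd_sum fun a₀ _ => Finset.dvd_sum fun t _ =>
      Finset.dvd_sum fun b₀ _ => ?_
    have hrr : ((r * p : ℕ) : GaussianInt) ∣ ((r * r : ℕ) : GaussianInt) := by
      obtain ⟨c, hc⟩ := mul_dvd_mul_left r hpr
      refine ⟨(c : GaussianInt), ?_⟩
      rw [hc]; push_cast; ring
    have heq : ((r : GaussianInt) * w s t) ^ 2
        * binomC (z0 a₀ b₀) ((r : GaussianInt) * w s t) k
        = ((r * r : ℕ) : GaussianInt) * (w s t ^ 2 * binomC (z0 a₀ b₀) ((r : GaussianInt) * w s t) k) := by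
      push_cast
      ring
    rw [heq]
    exact Dvd.dvd.mul_right hrr _
  rw [hsplit, hAval]
  have : ((p * p : ℕ) : GaussianInt) = (p : GaussianInt) ^ 2 := by push_cast; ring
  rw [this]
  have hfin : (p : GaussianInt) ^ 2 * Gsum' k r + B + D - (p : GaussianInt) ^ 2 * Gsum' k r
      = B + D := by ring
  rw [hfin]
  exact dvd_add hBdvd hDdvd

lemma gsum'_prime_pow (k p : ℕ) (hp : 0 < p) :
    ∀ e, 2 ≤ e → ((p ^ e : ℕ) : GaussianInt) ∣ Gsum' k (p ^ e) := by
  intro e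
  induction e with
  | zero => omega
  | succ m ih =>
      intro hm
      have hsplit : p ^ (m + 1) = p ^ m * p := by ring
      have hpdvd : p ∣ p ^ m := dvd_pow_self p (by omega)
      have hrec := gsum'_rec k p (p ^ m) hpdvd
      rw [← hsplit] at hrec
      rcases Nat.lt_or_ge m 2 with hm2 | hm2
      · -- m = 1 : base case e = 2
        have hm1 : m = 1 := by omega
        subst hm1
        have h2 : ((p ^ 2 : ℕ) : GaussianInt) ∣ (p : GaussianInt) ^ 2 * Gsum' k (p ^ 1) := by
          refine Dvd.dvd.mul_right ?_ _
          push_cast; exact dvd_refl _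
        have := dvd_add hrec h2
        simpa using this
      · have hm' := ih hm2
        have h2 : ((p ^ (m + 1) : ℕ) : GaussianInt) ∣ (p : GaussianInt) ^ 2 * Gsum' k (p ^ m) := by
          obtain ⟨c, hc⟩ := hm'
          refine ⟨(p : GaussianInt) * c, ?_⟩
          rw [hc]
          push_cast
          ring
        have := dvd_add hrec h2
        simpa using this

lemma S_eq_zero_prime_pow (k p e : ℕ) (hp : 0 < p) (he : 2 ≤ e) [NeZero (p ^ e)] :
    GZ.S k (p ^ e) = 0 := by
  have h := gsum'_prime_pow k p hp e he
  rw [← GZ.phi_gsum' k (p ^ e)]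
  obtain ⟨c, hc⟩ := h
  rw [hc, map_mul]
  have : GZ.phi (p ^ e) ((p ^ e : ℕ) : GaussianInt) = 0 := by
    rw [map_natCast, GZ.natCast_eq_rho, ZMod.natCast_self, map_zero]
  rw [this, zero_mul]

end primepow

section three

lemma GZ3_pow_eight : ∀ z : GZ 3, z = 0 ∨ z ^ 8 = 1 := by decide

lemma S_three_ne_zero (m : ℕ) (hm : 0 < m) : GZ.S (8 * m) 3 ≠ 0 := by
  have hval : GZ.S (8 * m) 3 = ∑ z : GZ 3, (if z = 0 then 0 else 1) := by
    rw [GZ.S_eq_univ_sum]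
    refine Finset.sum_congr rfl fun z _ => ?_
    rcases GZ3_pow_eight z with h | h
    · subst h
      rw [if_pos rfl, zero_pow (by omega)]
    · rw [pow_mul, h, one_pow]
      have hz : z ≠ 0 := by
        intro h0; rw [h0] at h
        rw [zero_pow (by omega)] at h
        exact absurd h (by decide)
      rw [if_neg hz]
  rw [hval]
  decide

end three

section assembly
open Finset

lemma S_eq_zero_odd_prime (p k : ℕ) (hp : p.Prime) (hp2 : p ≠ 2) (hk : ¬ 8 ∣ k)
    [NeZero p] : GZ.S k p = 0 := by
  haveI : Fact p.Prime := ⟨hp⟩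
  by_cases hp4 : p % 4 = 3
  · exact GZ.S_eq_zero_inert k hp4 hk
  · exact GZ.S_eq_zero_split k hp2 hp4

lemma gsum_zero_dvd (n : ℕ) : (n : GaussianInt) ∣ Gsum 0 n := by
  simp only [Gsum, pow_zero, Finset.sum_const, Nat.card_Icc, Nat.add_sub_cancel, smul_eq_mul,
    nsmul_eq_mul, mul_one]
  exact Dvd.intro _ rfl

lemma mult_dvd (k : ℕ) : ∀ n : ℕ, 0 < n →
    (∀ p : ℕ, p ∈ n.primeFactors →
      ((p ^ (n.factorization p) : ℕ) : GaussianInt) ∣ Gsum k (p ^ (n.factorization p))) →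
    (n : GaussianInt) ∣ Gsum k n := by
  intro n
  induction n using Nat.strong_induction_on with
  | _ n ih =>
    intro hn hcond
    by_cases h1 : n = 1
    · subst h1; exact one_dvd _
    · set p := n.minFac with hpdef
      have hp : p.Prime := Nat.minFac_prime h1
      haveI : Fact p.Prime := ⟨hp⟩
      set e := n.factorization p with hedef
      set q := p ^ e with hqdef
      set m := ordCompl[p] n with hmdef
      have hq_dvd : q ∣ n := Nat.ordProj_dvd n p
      have hqm : q * m = n := Nat.ordProj_mul_ordCompl_eq_self n p
      have hcop_pm : Nat.Coprime p m := Nat.coprime_ordCompl hp hn.ne'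
      have hcop : Nat.Coprime q m := hcop_pm.pow_left e
      have he_pos : 0 < e := hp.factorization_pos_of_dvd hn.ne' (Nat.minFac_dvd n)
      have hq_one : 1 < q := by
        calc 1 < p := hp.one_lt
        _ ≤ p ^ e := Nat.le_self_pow he_pos.ne' p
      have hm_pos : 0 < m := Nat.ordCompl_pos p hn.ne'
      have hm_lt : m < n := by
        rw [← hqm]
        calc m = 1 * m := (one_mul m).symm
        _ < q * m := by exact (Nat.mul_lt_mul_right hm_pos).mpr hq_one
      -- IH gives m ∣ Gsum k m
      have hm_dvd_gsum : (m : GaussianInt) ∣ Gsum k m := by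
        refine ih m hm_lt hm_pos ?_
        intro p' hp'
        have hp'p : p' ≠ p := by
          intro h
          have hdvd : p ∣ m := h ▸ Nat.dvd_of_mem_primeFactors hp'
          exact hp.ne_one (Nat.eq_one_of_dvd_one (hcop_pm ▸ Nat.dvd_gcd dvd_rfl hdvd))
        have hfact : m.factorization p' = n.factorization p' := by
          rw [hmdef, Nat.factorization_ordCompl n p, Finsupp.erase_ne hp'p]
        rw [hfact]
        refine hcond p' ?_
        have hmn : m ∣ n := ⟨q, by rw [← hqm]; ring⟩
        have hdvdn : p' ∣ n := (Nat.dvd_of_mem_primeFactors hp').trans hmn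
        exact Nat.mem_primeFactors.mpr ⟨(Nat.prime_of_mem_primeFactors hp'), hdvdn, hn.ne'⟩
      have hq_dvd_gsum : (q : GaussianInt) ∣ Gsum k q :=
        hcond p (Nat.mem_primeFactors.mpr ⟨hp, Nat.minFac_dvd n, hn.ne'⟩)
      haveI : NeZero q := ⟨by omega⟩
      haveI : NeZero m := ⟨hm_pos.ne'⟩
      have hSq : GZ.S k q = 0 := (GZ.dvd_gsum_iff k q).mp hq_dvd_gsum
      have hSm : GZ.S k m = 0 := (GZ.dvd_gsum_iff k m).mp hm_dvd_gsum
      have h1' : (q : GaussianInt) ∣ Gsum k n := GZ.dvd_gsum_of_S_eq_zero hq_dvd hSq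
      have hmn : m ∣ n := ⟨q, by rw [← hqm]; ring⟩
      have h2' : (m : GaussianInt) ∣ Gsum k n :=
        GZ.dvd_gsum_of_S_eq_zero hmn hSm
      have hcop' : IsCoprime ((q : ℤ) : GaussianInt) ((m : ℤ) : GaussianInt) :=
        (Nat.isCoprime_iff_coprime.mpr hcop).map (Int.castRingHom GaussianInt)
      have hcop'' : IsCoprime (q : GaussianInt) (m : GaussianInt) := by
        convert hcop' using 2 <;> push_cast <;> rfl
      have := hcop''.mul_dvd h1' h2'
      rw [← hqm]
      convert this using 2
      push_cast
      rfl

lemma not_in_Kset_of_eight (n t k : ℕ) (hn : 0 < n) (ht : n = 3 * t) (h3t : ¬ 3 ∣ t)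
    (hk8 : 8 ∣ k) (hk0 : 0 < k) : ¬ (n : GaussianInt) ∣ Gsum k n := by
  intro hdvd
  obtain ⟨m, rfl⟩ := hk8
  have hm : 0 < m := by omega
  haveI : NeZero 3 := ⟨by omega⟩
  haveI : Fact (Nat.Prime 3) := ⟨by norm_num⟩
  have h3n : ((3 : ℕ) : GaussianInt) ∣ (n : GaussianInt) :=
    ⟨(t : GaussianInt), by rw [ht]; push_cast; ring⟩
  have hphi : GZ.phi 3 (Gsum (8 * m) n) = 0 := by
    rw [GZ.phi_eq_zero_iff]
    exact dvd_trans (by exact_mod_cast h3n) hdvd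
  have hred : GZ.phi 3 (Gsum (8 * m) n) = (n / 3) ^ 2 • GZ.S (8 * m) 3 :=
    GZ.reduce (8 * m) 3 n ⟨t, ht⟩
  have hn3 : n / 3 = t := by omega
  rw [hred, hn3] at hphi
  have hmul : ((t ^ 2 : ℕ) : GZ 3) * GZ.S (8 * m) 3 = 0 := by
    rw [← nsmul_eq_mul]
    exact hphi
  have hunit : IsUnit ((t ^ 2 : ℕ) : GZ 3) := by
    rw [GZ.natCast_eq_rho]
    refine IsUnit.map GZ.rho ?_
    have hne : ((t ^ 2 : ℕ) : ZMod 3) ≠ 0 := by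
      rw [Ne, ZMod.natCast_eq_zero_iff]
      intro h
      exact h3t (Nat.Prime.dvd_of_dvd_pow (Fact.out : Nat.Prime 3) h)
    exact hne.isUnit
  have hS : GZ.S (8 * m) 3 = 0 := by
    obtain ⟨v, hv⟩ := hunit.exists_left_inv
    calc GZ.S (8 * m) 3 = (v * ((t ^ 2 : ℕ) : GZ 3)) * GZ.S (8 * m) 3 := by rw [hv, one_mul]
      _ = v * (((t ^ 2 : ℕ) : GZ 3) * GZ.S (8 * m) 3) := by ring
      _ = 0 := by rw [hmul, mul_zero]
  exact S_three_ne_zero m hm hS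

lemma two_adic_ne_one (n : ℕ) (hn : 0 < n) (h4 : n % 4 ≠ 2) (h2 : 2 ∈ n.primeFactors) :
    n.factorization 2 ≠ 1 := by
  intro he
  have hqm : 2 ^ (n.factorization 2) * ordCompl[2] n = n := Nat.ordProj_mul_ordCompl_eq_self n 2
  have hcop : Nat.Coprime 2 (ordCompl[2] n) := Nat.coprime_ordCompl Nat.prime_two hn.ne'
  have hodd : ¬ 2 ∣ ordCompl[2] n := (Nat.Prime.coprime_iff_not_dvd Nat.prime_two).mp hcop
  generalize hgen : ordCompl[2] n = c at hqm hodd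
  rw [he, pow_one] at hqm
  omega

/-- main per-prime divisibility: for `k` not a positive multiple of 8 -/
lemma in_Kset (n k : ℕ) (hn : 0 < n) (h4 : n % 4 ≠ 2) (hk : k = 0 ∨ ¬ 8 ∣ k) :
    (n : GaussianInt) ∣ Gsum k n := by
  rcases hk with rfl | hk8
  · exact gsum_zero_dvd n
  · refine mult_dvd k n hn ?_
    intro p hp
    set e := n.factorization p with hedef
    have hpp : p.Prime := Nat.prime_of_mem_primeFactors hp
    have he_pos : 0 < e := hpp.factorization_pos_of_dvd hn.ne' (Nat.dvd_of_mem_primeFactors hp)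
    haveI : NeZero (p ^ e) := ⟨pow_ne_zero e hpp.pos.ne'⟩
    rcases Nat.lt_or_ge e 2 with he1 | he2
    · have he1 : e = 1 := by omega
      have hp2 : p ≠ 2 := by
        intro h
        subst h
        exact two_adic_ne_one n hn h4 hp he1
      haveI : NeZero p := ⟨hpp.pos.ne'⟩
      have hS : GZ.S k p = 0 := S_eq_zero_odd_prime p k hpp hp2 hk8
      rw [he1, pow_one]
      exact (GZ.dvd_gsum_iff k p).mpr hS
    · have hS : GZ.S k (p ^ e) = 0 := S_eq_zero_prime_pow k p e hpp.pos he2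
      exact (GZ.dvd_gsum_iff k (p ^ e)).mpr hS

end assembly

theorem multiples_of_eight_not_in_Kset (n : ℕ) (hn : 0 < n) (h3 : 3 ∣ n) (h9 : ¬ 9 ∣ n) :
    ({k : ℕ | 0 < k ∧ 8 ∣ k} ⊆ (Kset n)ᶜ) ∧
    (n % 4 ≠ 2 → (Kset n)ᶜ = {k : ℕ | 0 < k ∧ 8 ∣ k}) := by
  obtain ⟨t, ht⟩ := h3
  have h3t : ¬ 3 ∣ t := by
    intro hdvd
    obtain ⟨u, hu⟩ := hdvd
    exact h9 ⟨u, by omega⟩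
  have part1 : {k : ℕ | 0 < k ∧ 8 ∣ k} ⊆ (Kset n)ᶜ := by
    rintro k ⟨hk0, hk8⟩
    exact not_in_Kset_of_eight n t k hn ht h3t hk8 hk0
  refine ⟨part1, ?_⟩
  intro h4
  ext k
  constructor
  · intro hk
    by_contra hcon
    rw [Set.mem_setOf_eq] at hcon
    push_neg at hcon
    have hk' : k = 0 ∨ ¬ 8 ∣ k := by
      by_cases h0 : k = 0
      · exact Or.inl h0
      · refine Or.inr fun h8 => ?_
        exact (hcon (by omega)) h8
    exact hk (in_Kset n k hn h4 hk')
  · intro hk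
    exact part1 hk
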